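/- The Artin–Hasse exponential AH(T) = exp(∑_{n≥0} T^{p^n}/p^n) is a formal power series with coefficients in ℤ_p. -/

import Mathlib

open PowerSeries
open scoped Classical

open Finset
namespace AHaux

variable (p : ℕ) [Fact p.Prime]

/-- ultrametric bound for finite sums -/
lemma norm_sum_le_of_le {ι : Type*} (s : Finset ι) (f : ι → ℚ_[p]) (c : ℝ) (hc : 0 ≤ c)
    (h : ∀ i ∈ s, ‖f i‖ ≤ c) : ‖∑ i ∈ s, f i‖ ≤ c := by
  classical
  induction s using Finset.induction_on with
  | empty => simpa using hc
  | @insert a s' hx ih =>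
    rw [Finset.sum_insert hx]
    refine le_trans (Padic.nonarchimedean _ _) (max_le (h a (mem_insert_self a s')) ?_)
    exact ih fun i hi => h i (mem_insert_of_mem hi)

noncomputable def e (m : ℕ) : ℚ_[p] := (p : ℚ_[p]) ^ m / (m.factorial : ℚ_[p])

lemma e_zero : e p 0 = 1 := by simp [e]

lemma succ_mul_e (m : ℕ) : ((m + 1 : ℕ) : ℚ_[p]) * e p (m + 1) = p * e p m := by
  have hfac : ((m.factorial : ℚ_[p])) ≠ 0 := by
    exact_mod_cast Nat.cast_ne_zero.mpr m.factorial_ne_zero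
  have hfac' : (((m+1).factorial : ℚ_[p])) ≠ 0 := by
    exact_mod_cast Nat.cast_ne_zero.mpr (m+1).factorial_ne_zero
  have h : ((m+1).factorial : ℚ_[p]) = ((m+1 : ℕ) : ℚ_[p]) * (m.factorial : ℚ_[p]) := by
    rw [Nat.factorial_succ]; push_cast; ring
  have hm1 : ((m+1 : ℕ) : ℚ_[p]) ≠ 0 := Nat.cast_ne_zero.mpr (Nat.succ_ne_zero m)
  rw [e, e, h, mul_div_assoc', mul_div_mul_left _ _ hm1, pow_succ,
    mul_comm ((p:ℚ_[p])^m) _, mul_div_assoc]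

lemma padicValNat_factorial_le (m : ℕ) (hm : 1 ≤ m) :
    padicValNat p (m.factorial) + 1 ≤ m := by
  have hp := (Fact.out : p.Prime)
  have hkey : (p - 1) * padicValNat p (m.factorial) = m - (p.digits m).sum :=
    sub_one_mul_padicValNat_factorial m
  have hone : 1 ≤ (p.digits m).sum := by
    have hm0 : m ≠ 0 := by omega
    have hne : p.digits m ≠ [] := Nat.digits_ne_nil_iff_ne_zero.mpr hm0
    have hlast := Nat.getLast_digit_ne_zero p hm0
    have hmem : (p.digits m).getLast hne ∈ p.digits m := List.getLast_mem hne
    have := List.single_le_sum (l := p.digits m) (fun x _ => Nat.zero_le x) _ hmem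
    omega
  have hsum_le : (p.digits m).sum ≤ m := Nat.digit_sum_le p m
  have h1 : 1 ≤ p - 1 := by have := hp.two_le; omega
  have h2 : padicValNat p (m.factorial) ≤ (p - 1) * padicValNat p (m.factorial) :=
    Nat.le_mul_of_pos_left _ (by omega)
  omega

lemma norm_natCast_factorial (m : ℕ) :
    ‖((m.factorial : ℕ) : ℚ_[p])‖ = (p : ℝ) ^ (-(padicValNat p m.factorial : ℤ)) := by
  have h0 : ((m.factorial : ℕ) : ℚ_[p]) ≠ 0 := by
    exact_mod_cast Nat.cast_ne_zero.mpr m.factorial_ne_zero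
  rw [Padic.norm_eq_zpow_neg_valuation h0, Padic.valuation_natCast]

lemma norm_e_le (m : ℕ) (hm : 1 ≤ m) : ‖e p m‖ ≤ (p : ℝ)⁻¹ := by
  have hp := (Fact.out : p.Prime)
  have hp1 : (1 : ℝ) < (p : ℝ) := by exact_mod_cast hp.one_lt
  have hp0 : (0 : ℝ) < (p : ℝ) := by positivity
  have hpnorm : ‖((p : ℕ) : ℚ_[p])‖ = (p : ℝ)⁻¹ := Padic.norm_p
  have h1 : ‖e p m‖ = (p:ℝ)^(-(m:ℤ)) * (p:ℝ)^((padicValNat p m.factorial : ℤ)) := by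
    rw [e, norm_div, norm_pow, hpnorm, norm_natCast_factorial]
    rw [← zpow_natCast ((p:ℝ)⁻¹) m, ← zpow_neg_one, ← zpow_mul]
    rw [div_eq_mul_inv, ← zpow_neg]
    norm_num
  rw [h1, ← zpow_add₀ (ne_of_gt hp0)]
  have hle := padicValNat_factorial_le p m hm
  calc (p:ℝ) ^ (-(m:ℤ) + (padicValNat p m.factorial : ℤ)) ≤ (p:ℝ) ^ (-1 : ℤ) := by
        apply zpow_le_zpow_right₀ (le_of_lt hp1)
        omega
    _ = (p:ℝ)⁻¹ := by simp

lemma norm_e_le_one (m : ℕ) : ‖e p m‖ ≤ 1 := by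
  rcases Nat.eq_zero_or_pos m with rfl | hm
  · simp [e_zero]
  · refine le_trans (norm_e_le p m hm) ?_
    have hp1 : (1:ℝ) ≤ (p:ℝ) := by exact_mod_cast (Fact.out : p.Prime).one_le
    rw [inv_le_one_iff₀]; right; exact hp1



variable (p : ℕ) [Fact p.Prime]

noncomputable def S (w : ℕ → ℚ_[p]) (m : ℕ) : ℚ_[p] :=
  ∑ n ∈ Finset.range m, if p ^ n ≤ m then w (m - p ^ n) else 0

lemma sum_reindex (k : ℕ) (w : ℕ → ℚ_[p]) :
    (∑ i ∈ Finset.range (k+1), if ∃ n : ℕ, (k - i) + 1 = p ^ n then w i else 0)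
      = S p w (k+1) := by
  classical
  have hp1 : 1 < p := (Fact.out : p.Prime).one_lt
  rw [S, ← Finset.sum_filter, ← Finset.sum_filter]
  refine Finset.sum_nbij' (fun i => Nat.log p (k + 1 - i)) (fun n => k + 1 - p ^ n)
    ?_ ?_ ?_ ?_ ?_
  · intro i hi
    simp only [Finset.mem_filter, Finset.mem_range] at hi ⊢
    obtain ⟨hik, n, hn⟩ := hi
    have hik' : i ≤ k := Nat.lt_succ_iff.mp hik
    have h1 : k + 1 - i = p ^ n := by omega
    rw [h1, Nat.log_pow hp1]
    constructor
    · have := Nat.lt_pow_self (n := n) hp1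
      omega
    · omega
  · intro n hn
    simp only [Finset.mem_filter, Finset.mem_range] at hn ⊢
    obtain ⟨hnk, hle⟩ := hn
    have h1 : 1 ≤ p ^ n := Nat.one_le_pow _ _ (by omega)
    refine ⟨by omega, n, by omega⟩
  · intro i hi
    simp only [Finset.mem_filter, Finset.mem_range] at hi
    obtain ⟨hik, n, hn⟩ := hi
    have hik' : i ≤ k := Nat.lt_succ_iff.mp hik
    have h1 : k + 1 - i = p ^ n := by omega
    rw [h1, Nat.log_pow hp1, ← h1]
    omega
  · intro n hn
    simp only [Finset.mem_filter, Finset.mem_range] at hn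
    obtain ⟨hnk, hle⟩ := hn
    have h1 : 1 ≤ p ^ n := Nat.one_le_pow _ _ (by omega)
    have h2 : k + 1 - (k + 1 - p ^ n) = p ^ n := by omega
    rw [h2, Nat.log_pow hp1]
  · intro i hi
    simp only [Finset.mem_filter, Finset.mem_range] at hi
    obtain ⟨hik, n, hn⟩ := hi
    have hik' : i ≤ k := Nat.lt_succ_iff.mp hik
    have h1 : k + 1 - i = p ^ n := by omega
    rw [h1, Nat.log_pow hp1]
    congr 1
    omega

noncomputable def G0 : PowerSeries ℚ_[p] :=
  PowerSeries.mk (fun k => if ∃ n : ℕ, k + 1 = p ^ n then (1 : ℚ_[p]) else 0)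

lemma recur (c : ℚ_[p]) (W : PowerSeries ℚ_[p])
    (hW : d⁄dX ℚ_[p] W = c • (W * G0 p)) (m : ℕ) (hm : 1 ≤ m) :
    ((m : ℕ) : ℚ_[p]) * coeff m W = c * S p (fun n => coeff n W) m := by
  classical
  obtain ⟨k, rfl⟩ : ∃ k, m = k + 1 := ⟨m - 1, by omega⟩
  have h := congrArg (fun f => coeff k f) hW
  simp only [coeff_derivative, map_smul, smul_eq_mul] at h
  rw [coeff_mul, Finset.Nat.sum_antidiagonal_eq_sum_range_succ_mk] at h
  have h2 : ∑ i ∈ Finset.range (k+1),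
      coeff (i, k - i).1 W * coeff (i, k - i).2 (G0 p)
      = S p (fun n => coeff n W) (k+1) := by
    rw [← sum_reindex p k (fun n => coeff n W)]
    refine Finset.sum_congr rfl fun i _ => ?_
    simp only [G0, coeff_mk]
    split_ifs with hcond
    · rw [mul_one]
    · rw [mul_zero]
  rw [h2] at h
  rw [mul_comm]
  push_cast
  exact h

/-- The candidate for the coefficients of F^p : g w m = ∑_{p j ≤ m} w j * p^(m-pj)/(m-pj)!. -/
noncomputable def g (w : ℕ → ℚ_[p]) (t : ℕ) : ℚ_[p] :=
  ∑ j ∈ Finset.range (t+1), if p * j ≤ t then w j * e p (t - p * j) else 0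

lemma g_eq_sum (w : ℕ → ℚ_[p]) (t N : ℕ) (h : t + 1 ≤ N) :
    g p w t = ∑ j ∈ Finset.range N, if p * j ≤ t then w j * e p (t - p * j) else 0 := by
  classical
  rw [g]
  refine Finset.sum_subset (Finset.range_subset_range.mpr h) fun j _ hj => ?_
  simp only [Finset.mem_range, not_lt] at hj
  have hp1 : 1 < p := (Fact.out : p.Prime).one_lt
  rw [if_neg]
  intro hle
  have : j ≤ p * j := Nat.le_mul_of_pos_left _ (by omega)
  omega

lemma g_zero (w : ℕ → ℚ_[p]) (hw0 : w 0 = 1) : g p w 0 = 1 := by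
  simp [g, e_zero, hw0]


lemma S_zero (w : ℕ → ℚ_[p]) : S p w 0 = 0 := by simp [S]

lemma step5 (w : ℕ → ℚ_[p]) (m : ℕ) (hm : 1 ≤ m) :
    (∑ j ∈ Finset.range (m+1), if p * j ≤ m then S p w j * e p (m - p * j) else 0)
      = ∑ n ∈ Finset.range (m-1), if p ^ (n+1) ≤ m then g p w (m - p ^ (n+1)) else 0 := by
  classical
  have hp1 : 1 < p := (Fact.out : p.Prime).one_lt
  have hU : (∑ j ∈ Finset.range (m+1), if p * j ≤ m then S p w j * e p (m - p * j) else 0)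
      = ∑ x ∈ (Finset.range (m+1)) ×ˢ (Finset.range (m+1)),
          if p * x.1 ≤ m ∧ p ^ x.2 ≤ x.1 then w (x.1 - p ^ x.2) * e p (m - p * x.1) else 0 := by
    rw [Finset.sum_product]
    refine Finset.sum_congr rfl fun j hj => ?_
    by_cases hc : p * j ≤ m
    · rw [if_pos hc, S, Finset.sum_mul]
      have hjm : j ≤ m + 1 := by
        have : j ≤ p * j := Nat.le_mul_of_pos_left _ (by omega)
        omega
      rw [Finset.sum_subset (Finset.range_subset_range.mpr hjm) (fun t _ hts => by
        have htj : j ≤ t := by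
          simp only [Finset.mem_range, not_lt] at hts
          exact hts
        rw [if_neg, zero_mul]
        intro hle
        have := Nat.lt_pow_self (n := t) hp1
        omega)]
      refine Finset.sum_congr rfl fun t _ => ?_
      by_cases hc2 : p ^ t ≤ j
      · rw [if_pos hc2, if_pos ⟨hc, hc2⟩]
      · rw [if_neg hc2, if_neg (by tauto), zero_mul]
    · rw [if_neg hc]
      symm
      exact Finset.sum_eq_zero fun t _ => by rw [if_neg (by tauto)]
  have hext : (∑ n ∈ Finset.range (m-1), if p ^ (n+1) ≤ m then g p w (m - p ^ (n+1)) else 0)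
      = ∑ n ∈ Finset.range (m+1), if p ^ (n+1) ≤ m then g p w (m - p ^ (n+1)) else 0 := by
    refine Finset.sum_subset (Finset.range_subset_range.mpr (by omega)) (fun n _ hn' => ?_)
    have hn2 : m - 1 ≤ n := by
      simp only [Finset.mem_range, not_lt] at hn'
      exact hn'
    rw [if_neg]
    have h2 := Nat.lt_pow_self (n := n+1) hp1
    omega
  have hV : (∑ n ∈ Finset.range (m+1), if p ^ (n+1) ≤ m then g p w (m - p ^ (n+1)) else 0)
      = ∑ x ∈ (Finset.range (m+1)) ×ˢ (Finset.range (m+1)),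
          if p ^ (x.1+1) ≤ m ∧ p * x.2 + p ^ (x.1+1) ≤ m then
            w x.2 * e p (m - p ^ (x.1+1) - p * x.2) else 0 := by
    rw [Finset.sum_product]
    refine Finset.sum_congr rfl fun n hn => ?_
    by_cases hc : p ^ (n+1) ≤ m
    · rw [if_pos hc, g_eq_sum p w (m - p ^ (n+1)) (m+1) (by omega)]
      refine Finset.sum_congr rfl fun j' _ => ?_
      have hiff : p * j' ≤ m - p ^ (n+1) ↔ p ^ (n+1) ≤ m ∧ p * j' + p ^ (n+1) ≤ m :=
        ⟨fun h => ⟨hc, by omega⟩, fun h => by omega⟩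
      rw [if_congr hiff rfl rfl]
    · rw [if_neg hc]
      symm
      exact Finset.sum_eq_zero fun j' _ => by rw [if_neg (by tauto)]
  rw [hU, hext, hV, ← Finset.sum_filter, ← Finset.sum_filter]
  refine Finset.sum_nbij' (fun x => (x.2, x.1 - p ^ x.2)) (fun y => (y.2 + p ^ y.1, y.1))
    ?_ ?_ ?_ ?_ ?_
  · rintro ⟨j, t⟩ hx
    simp only [Finset.mem_filter, Finset.mem_product, Finset.mem_range] at hx ⊢
    obtain ⟨⟨hj, ht⟩, hc, hpt⟩ := hx
    have hkey : p * (j - p ^ t) + p ^ (t+1) = p * j := by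
      rw [pow_succ, mul_comm (p ^ t) p, ← Nat.mul_add, Nat.sub_add_cancel hpt]
    refine ⟨⟨ht, ?_⟩, ?_, ?_⟩
    · omega
    · calc p ^ (t+1) ≤ p * (j - p ^ t) + p ^ (t+1) := Nat.le_add_left _ _
        _ = p * j := hkey
        _ ≤ m := hc
    · rw [hkey]; exact hc
  · rintro ⟨n, j'⟩ hy
    simp only [Finset.mem_filter, Finset.mem_product, Finset.mem_range] at hy ⊢
    obtain ⟨⟨hn, hj'⟩, hc1, hc2⟩ := hy
    have hkey : p * (j' + p ^ n) = p * j' + p ^ (n+1) := by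
      rw [Nat.mul_add, pow_succ, mul_comm (p ^ n) p]
    have hle : j' + p ^ n ≤ p * (j' + p ^ n) := Nat.le_mul_of_pos_left _ (by omega)
    refine ⟨⟨?_, hn⟩, ?_, ?_⟩
    · omega
    · rw [hkey]; exact hc2
    · exact Nat.le_add_left _ _
  · rintro ⟨j, t⟩ hx
    simp only [Finset.mem_filter, Finset.mem_product, Finset.mem_range] at hx
    obtain ⟨⟨hj, ht⟩, hc, hpt⟩ := hx
    simp only [Prod.mk.injEq]
    exact ⟨Nat.sub_add_cancel hpt, trivial⟩
  · rintro ⟨n, j'⟩ hy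
    simp only [Prod.mk.injEq]
    exact ⟨trivial, by omega⟩
  · rintro ⟨j, t⟩ hx
    simp only [Finset.mem_filter, Finset.mem_product, Finset.mem_range] at hx
    obtain ⟨⟨hj, ht⟩, hc, hpt⟩ := hx
    simp only []
    congr 1
    have hkey : p ^ (t+1) + p * (j - p ^ t) = p * j := by
      rw [pow_succ, mul_comm (p ^ t) p, add_comm, ← Nat.mul_add, Nat.sub_add_cancel hpt]
    rw [Nat.sub_sub, hkey]

lemma rec_g (w : ℕ → ℚ_[p]) (hw : ∀ m, 1 ≤ m → ((m : ℕ) : ℚ_[p]) * w m = S p w m)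
    (m : ℕ) (hm : 1 ≤ m) :
    ((m : ℕ) : ℚ_[p]) * g p w m = (p : ℚ_[p]) * S p (g p w) m := by
  classical
  have hp1 : 1 < p := (Fact.out : p.Prime).one_lt
  have hsplit : ((m : ℕ) : ℚ_[p]) * g p w m
      = (p : ℚ_[p]) * (∑ j ∈ Finset.range (m+1),
            if p * j ≤ m then S p w j * e p (m - p * j) else 0)
        + (p : ℚ_[p]) * g p w (m-1) := by
    rw [g, Finset.mul_sum, g_eq_sum p w (m-1) (m+1) (by omega), Finset.mul_sum,
      Finset.mul_sum, ← Finset.sum_add_distrib]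
    refine Finset.sum_congr rfl fun j hj => ?_
    have hjw : ((j : ℕ) : ℚ_[p]) * w j = S p w j := by
      rcases Nat.eq_zero_or_pos j with rfl | hj1
      · simp [S_zero]
      · exact hw j hj1
    by_cases hc : p * j ≤ m
    · rw [if_pos hc, if_pos hc]
      by_cases hc2 : p * j ≤ m - 1
      · rw [if_pos hc2]
        have hs : m - p * j = (m - 1 - p * j) + 1 := by omega
        have hmeq : ((m : ℕ) : ℚ_[p]) = ((p * j : ℕ) : ℚ_[p]) + (((m - 1 - p * j) + 1 : ℕ) : ℚ_[p]) := by
          rw [← Nat.cast_add]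
          congr 1
          omega
        rw [hs, hmeq, add_mul]
        congr 1
        · calc ((p * j : ℕ) : ℚ_[p]) * (w j * e p (m - 1 - p * j + 1))
              = (p : ℚ_[p]) * ((((j:ℕ):ℚ_[p]) * w j) * e p (m - 1 - p * j + 1)) := by
                push_cast; ring
            _ = (p : ℚ_[p]) * (S p w j * e p (m - 1 - p * j + 1)) := by rw [hjw]
        · calc (((m - 1 - p * j) + 1 : ℕ) : ℚ_[p]) * (w j * e p (m - 1 - p * j + 1))
              = w j * ((((m - 1 - p * j) + 1 : ℕ) : ℚ_[p]) * e p ((m - 1 - p * j) + 1)) := by ring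
            _ = w j * ((p : ℚ_[p]) * e p (m - 1 - p * j)) := by rw [succ_mul_e]
            _ = (p : ℚ_[p]) * (w j * e p (m - 1 - p * j)) := by ring
      · rw [if_neg hc2]
        have hpj : p * j = m := by omega
        have h0 : m - p * j = 0 := by omega
        rw [h0, e_zero, mul_one, mul_one, mul_zero, add_zero]
        have : ((m : ℕ) : ℚ_[p]) = (p : ℚ_[p]) * ((j : ℕ) : ℚ_[p]) := by
          rw [← hpj]; push_cast; ring
        rw [this, mul_assoc, hjw]
    · rw [if_neg hc, if_neg hc, if_neg (by omega)]
      simp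
  have hS : S p (g p w) m
      = (∑ n ∈ Finset.range (m-1), if p ^ (n+1) ≤ m then g p w (m - p ^ (n+1)) else 0)
        + g p w (m-1) := by
    rw [S]
    obtain ⟨m', rfl⟩ : ∃ m', m = m' + 1 := ⟨m - 1, by omega⟩
    rw [Finset.sum_range_succ']
    simp only [Nat.add_sub_cancel, pow_zero]
    congr 1
  rw [hsplit, hS, mul_add, step5 p w m hm]

lemma unique (u v : ℕ → ℚ_[p]) (h0 : u 0 = v 0)
    (hu : ∀ m, 1 ≤ m → ((m : ℕ) : ℚ_[p]) * u m = (p : ℚ_[p]) * S p u m)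
    (hv : ∀ m, 1 ≤ m → ((m : ℕ) : ℚ_[p]) * v m = (p : ℚ_[p]) * S p v m) :
    ∀ n, u n = v n := by
  intro n
  induction n using Nat.strong_induction_on with
  | _ n ih =>
    rcases Nat.eq_zero_or_pos n with rfl | hn
    · exact h0
    · have hSeq : S p u n = S p v n := by
        rw [S, S]
        refine Finset.sum_congr rfl fun t _ => ?_
        by_cases hc : p ^ t ≤ n
        · rw [if_pos hc, if_pos hc, ih (n - p ^ t) (by
            have : 1 ≤ p ^ t := Nat.one_le_pow _ _ (Fact.out : p.Prime).pos
            omega)]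
        · rw [if_neg hc, if_neg hc]
      have hcast : ((n : ℕ) : ℚ_[p]) ≠ 0 := Nat.cast_ne_zero.mpr (by omega)
      have h1 := hu n hn
      have h2 := hv n hn
      rw [hSeq] at h1
      exact mul_left_cancel₀ hcast (h1.trans h2.symm)

lemma coeff_eq_zero_of_dvd {f : PowerSeries ℚ_[p]} {k n : ℕ} (h : X ^ k ∣ f) (hn : n < k) :
    coeff n f = 0 := by
  rw [X_pow_dvd_iff] at h
  exact h n hn

set_option maxHeartbeats 1000000 in
lemma pow_coeff_split (F : PowerSeries ℚ_[p]) (hconst : constantCoeff F = 1)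
    (n : ℕ) (hn : 1 ≤ n) :
    coeff n (F ^ p) =
      coeff n (((trunc n F : Polynomial ℚ_[p]) : PowerSeries ℚ_[p]) ^ p)
        + (p : ℚ_[p]) * coeff n F := by
  classical
  have hp := (Fact.out : p.Prime)
  set P : PowerSeries ℚ_[p] := ((trunc n F : Polynomial ℚ_[p]) : PowerSeries ℚ_[p]) with hP
  have hD : X ^ n ∣ (F - P) := by
    rw [X_pow_dvd_iff]
    intro i hi
    simp only [map_sub, hP, Polynomial.coeff_coe, coeff_trunc, if_pos hi, sub_self]
  obtain ⟨Dq, hDq⟩ := hD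
  have hFPD : F = P + X ^ n * Dq := by rw [← hDq]; ring
  have hcoeffD : coeff 0 Dq = coeff n F := by
    have h1 : coeff n (F - P) = coeff n F := by
      simp only [map_sub, hP, Polynomial.coeff_coe, coeff_trunc, if_neg (lt_irrefl n), sub_zero]
    rw [hDq] at h1
    rw [← h1]
    have h2 := coeff_X_pow_mul Dq n 0
    simpa using h2.symm
  have hcP0 : constantCoeff P = 1 := by
    have h3 : coeff 0 P = coeff 0 F := by
      simp only [hP, Polynomial.coeff_coe, coeff_trunc, if_pos (by omega : 0 < n)]
    rw [← coeff_zero_eq_constantCoeff_apply, h3, coeff_zero_eq_constantCoeff_apply, hconst]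
  calc coeff n (F ^ p) = coeff n ((P + X ^ n * Dq) ^ p) := by rw [← hFPD]
    _ = ∑ m ∈ Finset.range (p + 1),
          coeff n (P ^ m * (X ^ n * Dq) ^ (p - m) * ((p.choose m : ℕ) : PowerSeries ℚ_[p])) := by
        rw [add_pow, map_sum]
    _ = coeff n (P ^ p) + (p : ℚ_[p]) * coeff n F := by
        have hpp : p - 1 + 1 = p := by have := hp.pos; omega
        rw [show p + 1 = (p - 1) + 1 + 1 from by omega]
        rw [Finset.sum_range_succ, Finset.sum_range_succ]
        have hzero : ∀ m ∈ Finset.range (p - 1),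
            coeff n (P ^ m * (X ^ n * Dq) ^ (p - m)
              * ((p.choose m : ℕ) : PowerSeries ℚ_[p])) = 0 := by
          intro m hm
          have hm' : m < p - 1 := Finset.mem_range.mp hm
          have h2 : 2 ≤ p - m := by have := hp.two_le; omega
          refine coeff_eq_zero_of_dvd p (k := n + 1) ?_ (by omega)
          have hdvd1 : X ^ (n * (p - m)) ∣ (X ^ n * Dq) ^ (p - m) := by
            rw [mul_pow, ← pow_mul]
            exact Dvd.intro _ rfl
          have hdvd2 : (X : PowerSeries ℚ_[p]) ^ (n + 1) ∣ X ^ (n * (p - m)) := by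
            apply pow_dvd_pow
            have h4 : 2 * n ≤ n * (p - m) := by
              calc 2 * n = n * 2 := by ring
                _ ≤ n * (p - m) := Nat.mul_le_mul_left n h2
            omega
          exact ((hdvd2.trans hdvd1).mul_left _).mul_right _
        rw [Finset.sum_eq_zero hzero, zero_add, add_comm, hpp]
        congr 1
        · rw [Nat.sub_self, pow_zero, mul_one, Nat.choose_self, Nat.cast_one, mul_one]
        · have h1 : p - (p - 1) = 1 := by have := hp.pos; omega
          have hch : p.choose (p - 1) = p := by
            rw [← Nat.choose_symm (by omega : p - 1 ≤ p), h1, Nat.choose_one_right]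
          rw [h1, pow_one, hch]
          have hC : ((p : ℕ) : PowerSeries ℚ_[p]) = C ((p : ℕ) : ℚ_[p]) := by
            rw [map_natCast]
          rw [hC, coeff_mul_C]
          have h5 : P ^ (p - 1) * (X ^ n * Dq) = X ^ n * (P ^ (p - 1) * Dq) := by ring
          rw [h5, coeff_X_pow_mul' (P ^ (p - 1) * Dq) n n, if_pos le_rfl, Nat.sub_self,
            coeff_zero_eq_constantCoeff_apply, map_mul, map_pow, hcP0, one_pow, one_mul,
            ← coeff_zero_eq_constantCoeff_apply, hcoeffD]
          ring

lemma coeff_pow_p_congr (P' : Polynomial ℤ_[p]) (n : ℕ) :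
    ‖(P' ^ p).coeff n - (if p ∣ n then P'.coeff (n / p) else 0)‖ ≤ (p : ℝ)⁻¹ := by
  classical
  have hp := (Fact.out : p.Prime)
  have hz : PadicInt.toZMod ((P' ^ p).coeff n)
      = PadicInt.toZMod (if p ∣ n then P'.coeff (n / p) else 0) := by
    have hfr : (P'.map (PadicInt.toZMod) ^ p)
        = Polynomial.map (frobenius (ZMod p) p)
            (Polynomial.expand (ZMod p) p (P'.map PadicInt.toZMod)) :=
      (Polynomial.map_frobenius_expand p _).symm
    calc PadicInt.toZMod ((P' ^ p).coeff n)
        = ((P'.map PadicInt.toZMod) ^ p).coeff n := by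
          rw [← Polynomial.map_pow, Polynomial.coeff_map]
      _ = (Polynomial.map (frobenius (ZMod p) p)
            (Polynomial.expand (ZMod p) p (P'.map PadicInt.toZMod))).coeff n := by rw [hfr]
      _ = ((Polynomial.expand (ZMod p) p (P'.map PadicInt.toZMod)).coeff n) ^ p := by
          rw [Polynomial.coeff_map]; rfl
      _ = (Polynomial.expand (ZMod p) p (P'.map PadicInt.toZMod)).coeff n := ZMod.pow_card _
      _ = if p ∣ n then (P'.map PadicInt.toZMod).coeff (n / p) else 0 := by
          rw [Polynomial.coeff_expand hp.pos]
      _ = PadicInt.toZMod (if p ∣ n then P'.coeff (n / p) else 0) := by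
          split_ifs
          · rw [Polynomial.coeff_map]
          · rw [map_zero]
  have hk : (P' ^ p).coeff n - (if p ∣ n then P'.coeff (n / p) else 0)
      ∈ RingHom.ker (PadicInt.toZMod : ℤ_[p] →+* ZMod p) := by
    rw [RingHom.mem_ker, map_sub, hz, sub_self]
  rw [PadicInt.ker_toZMod, PadicInt.maximalIdeal_eq_span_p, Ideal.mem_span_singleton] at hk
  obtain ⟨y, hy⟩ := hk
  rw [hy, norm_mul, PadicInt.norm_p]
  calc (p : ℝ)⁻¹ * ‖y‖ ≤ (p : ℝ)⁻¹ * 1 := by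
        apply mul_le_mul_of_nonneg_left (PadicInt.norm_le_one y)
        positivity
    _ = (p : ℝ)⁻¹ := mul_one _

lemma g_bound (w : ℕ → ℚ_[p]) (n : ℕ) (hn : 1 ≤ n) (hbd : ∀ j, j < n → ‖w j‖ ≤ 1) :
    ‖g p w n - (if p ∣ n then w (n / p) else 0)‖ ≤ (p : ℝ)⁻¹ := by
  classical
  have hp := (Fact.out : p.Prime)
  have hpR : (0:ℝ) < (p : ℝ)⁻¹ := by
    have := hp.pos
    positivity
  have hr : (if p ∣ n then w (n / p) else 0)
      = ∑ j ∈ Finset.range (n+1), (if p * j = n then w j else 0) := by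
    by_cases hd : p ∣ n
    · obtain ⟨q, rfl⟩ := hd
      rw [if_pos ⟨q, rfl⟩]
      rw [Finset.sum_eq_single q]
      · rw [if_pos rfl, Nat.mul_div_cancel_left q hp.pos]
      · intro j _ hjq
        rw [if_neg]
        intro hc
        exact hjq (Nat.eq_of_mul_eq_mul_left hp.pos hc)
      · intro hq
        exfalso
        apply hq
        rw [Finset.mem_range]
        have : q ≤ p * q := Nat.le_mul_of_pos_left _ hp.pos
        omega
    · rw [if_neg hd]
      symm
      refine Finset.sum_eq_zero fun j _ => ?_
      rw [if_neg]
      intro hc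
      exact hd ⟨j, hc.symm⟩
  rw [hr, g, ← Finset.sum_sub_distrib]
  refine norm_sum_le_of_le p _ _ _ (le_of_lt hpR) fun j _ => ?_
  by_cases hc1 : p * j ≤ n
  · by_cases hc2 : p * j = n
    · rw [if_pos hc1, if_pos hc2, hc2, Nat.sub_self, e_zero, mul_one, sub_self, norm_zero]
      exact le_of_lt hpR
    · rw [if_pos hc1, if_neg hc2, sub_zero]
      have hjn : j < n := by
        have : j ≤ p * j := Nat.le_mul_of_pos_left _ hp.pos
        omega
      calc ‖w j * e p (n - p * j)‖ = ‖w j‖ * ‖e p (n - p * j)‖ := norm_mul _ _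
        _ ≤ 1 * (p : ℝ)⁻¹ := by
            apply mul_le_mul (hbd j hjn) (norm_e_le p _ (by omega)) (norm_nonneg _) zero_le_one
        _ = (p : ℝ)⁻¹ := one_mul _
  · rw [if_neg hc1, if_neg (by omega), sub_zero, norm_zero]
    exact le_of_lt hpR

end AHaux

open AHaux

/-- The Artin–Hasse exponential AH(T) = exp(∑_{n≥0} T^{p^n}/p^n) has all its coefficients
in ℤ_p.  The series AH is characterized among power series over ℚ_p as the unique F with
constant coefficient 1 whose logarithmic derivative is ∑_{n≥0} T^{p^n - 1}, i.e.
F' = F · ∑_{n≥0} T^{p^n - 1}; the claim is that any such F has p-adically integral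
coefficients. -/
theorem artin_hasse_coefficients_are_padic_integers
    (p : ℕ) [Fact p.Prime]
    (F : PowerSeries ℚ_[p])
    (hconst : PowerSeries.constantCoeff F = 1)
    (hderiv : d⁄dX ℚ_[p] F =
      F * PowerSeries.mk (fun k => if ∃ n : ℕ, k + 1 = p ^ n then (1 : ℚ_[p]) else 0)) :
    ∀ k : ℕ, ‖PowerSeries.coeff k F‖ ≤ 1 := by
  classical
  have hp := (Fact.out : p.Prime)
  set a : ℕ → ℚ_[p] := fun n => coeff n F with ha
  have ha0 : a 0 = 1 := by
    rw [ha]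
    simp only [coeff_zero_eq_constantCoeff_apply]
    exact hconst
  have hrecF : ∀ m, 1 ≤ m → ((m : ℕ) : ℚ_[p]) * a m = S p a m := by
    intro m hm
    have := recur p 1 F (by rw [one_smul]; exact hderiv) m hm
    simpa using this
  have hrecH : ∀ m, 1 ≤ m → ((m : ℕ) : ℚ_[p]) * coeff m (F ^ p)
      = (p : ℚ_[p]) * S p (fun n => coeff n (F ^ p)) m := by
    intro m hm
    refine recur p ((p : ℚ_[p])) (F ^ p) ?_ m hm
    have hpp : p - 1 + 1 = p := by have := hp.pos; omega
    calc d⁄dX ℚ_[p] (F ^ p) = p • F ^ (p - 1) • (d⁄dX ℚ_[p] F) :=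
          Derivation.leibniz_pow _ F p
      _ = p • (F ^ (p - 1) * (F * G0 p)) := by rw [hderiv, smul_eq_mul]; rfl
      _ = p • (F ^ p * G0 p) := by rw [← mul_assoc, ← pow_succ, hpp]
      _ = (p : ℚ_[p]) • (F ^ p * G0 p) := (Nat.cast_smul_eq_nsmul ℚ_[p] p _).symm
  have hgrec : ∀ m, 1 ≤ m → ((m : ℕ) : ℚ_[p]) * g p a m = (p : ℚ_[p]) * S p (g p a) m :=
    fun m hm => rec_g p a hrecF m hm
  have h00 : coeff 0 (F ^ p) = g p a 0 := by
    rw [g_zero p a ha0, coeff_zero_eq_constantCoeff_apply, map_pow, hconst, one_pow]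
  have heq : ∀ n, coeff n (F ^ p) = g p a n :=
    unique p (fun n => coeff n (F ^ p)) (g p a) h00 hrecH hgrec
  intro k
  induction k using Nat.strong_induction_on with
  | _ n ih =>
    rcases Nat.eq_zero_or_pos n with rfl | hn
    · rw [show coeff 0 F = a 0 from rfl, ha0, norm_one]
    · show ‖a n‖ ≤ 1
      have ihn : ∀ j, j < n → ‖a j‖ ≤ 1 := fun j hj => ih j hj
      set b : ℕ → ℤ_[p] := fun i => if h : i < n then (⟨a i, ihn i h⟩ : ℤ_[p]) else 0 with hb
      set P' : Polynomial ℤ_[p] := ∑ i ∈ Finset.range n, Polynomial.C (b i) * Polynomial.X ^ i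
        with hP'
      have hcoeffP' : ∀ j, P'.coeff j = if j < n then b j else 0 := by
        intro j
        rw [hP', Polynomial.finset_sum_coeff]
        simp only [Polynomial.coeff_C_mul, Polynomial.coeff_X_pow, mul_ite, mul_one, mul_zero]
        rw [Finset.sum_ite_eq (Finset.range n) j b]
        simp [Finset.mem_range]
      have hmap : P'.map (PadicInt.Coe.ringHom) = trunc n F := by
        refine Polynomial.ext fun j => ?_
        rw [Polynomial.coeff_map, hcoeffP', coeff_trunc]
        split_ifs with h
        · have hbj : b j = (⟨a j, ihn j h⟩ : ℤ_[p]) := dif_pos h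
          rw [hbj]
          rfl
        · rw [map_zero]
      have hcoe : coeff n (((trunc n F : Polynomial ℚ_[p]) : PowerSeries ℚ_[p]) ^ p)
          = (((P' ^ p).coeff n : ℤ_[p]) : ℚ_[p]) := by
        rw [← Polynomial.coe_pow, Polynomial.coeff_coe, ← hmap, ← Polynomial.map_pow,
          Polynomial.coeff_map]
        rfl
      have hrcoe : (((if p ∣ n then P'.coeff (n / p) else 0 : ℤ_[p])) : ℚ_[p])
          = (if p ∣ n then a (n / p) else 0) := by
        split_ifs with h
        · rw [hcoeffP' (n / p), if_pos (Nat.div_lt_self (by omega) hp.one_lt)]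
          have hlt : n / p < n := Nat.div_lt_self (by omega : 0 < n) hp.one_lt
          have hbj : b (n / p) = (⟨a (n / p), ihn _ hlt⟩ : ℤ_[p]) := dif_pos hlt
          rw [hbj]
        · rfl
      have hb1 := coeff_pow_p_congr p P' n
      have hb1' : ‖coeff n (((trunc n F : Polynomial ℚ_[p]) : PowerSeries ℚ_[p]) ^ p)
          - (if p ∣ n then a (n / p) else 0)‖ ≤ (p : ℝ)⁻¹ := by
        rw [hcoe, ← hrcoe, ← PadicInt.coe_sub, ← PadicInt.norm_def]
        exact hb1
      have hb2 : ‖g p a n - (if p ∣ n then a (n / p) else 0)‖ ≤ (p : ℝ)⁻¹ :=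
        g_bound p a n hn ihn
      have hkey : (p : ℚ_[p]) * a n
          = (g p a n - (if p ∣ n then a (n / p) else 0))
            - (coeff n (((trunc n F : Polynomial ℚ_[p]) : PowerSeries ℚ_[p]) ^ p)
                - (if p ∣ n then a (n / p) else 0)) := by
        rw [sub_sub_sub_cancel_right]
        have hsplit := pow_coeff_split p F hconst n hn
        linear_combination heq n - hsplit
      have hnorm : ‖(p : ℚ_[p]) * a n‖ ≤ (p : ℝ)⁻¹ := by
        rw [hkey, sub_eq_add_neg]
        refine le_trans (Padic.nonarchimedean _ _) (max_le hb2 ?_)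
        rw [norm_neg]
        exact hb1'
      rw [norm_mul, Padic.norm_p] at hnorm
      have hp0 : (0 : ℝ) < (p : ℝ) := by exact_mod_cast hp.pos
      calc ‖a n‖ = (p : ℝ) * ((p : ℝ)⁻¹ * ‖a n‖) := by
            rw [← mul_assoc, mul_inv_cancel₀ (ne_of_gt hp0), one_mul]
        _ ≤ (p : ℝ) * (p : ℝ)⁻¹ := mul_le_mul_of_nonneg_left hnorm (le_of_lt hp0)
        _ = 1 := mul_inv_cancel₀ (ne_of_gt hp0)
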